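/- For every w ∈ W and each i ∈ {1,2}, N̄(w) = {r_x : x ∈ Φ_i⁺ with x̂ ∈ N_i(w)}; that is, the set of reflections t ∈ T with ℓ(wt) < ℓ(w) coincides with the set of reflections corresponding to the (classes of) positive roots sent to negative roots by w. -/

import Mathlib

open Pointwise

/-- The positive linear cone of a subset `A` of a real vector space: finite linear
combinations of elements of `A` with all coefficients nonnegative and at least one
strictly positive. -/
def PLC {V : Type*} [AddCommGroup V] [Module ℝ V] (A : Set V) : Set V :=
  { v | ∃ c : V →₀ ℝ, (∀ a, 0 ≤ c a) ∧ ↑c.support ⊆ A ∧ c ≠ 0 ∧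
          v = c.sum fun a t => t • a }

/-- `altEnd a b m` is the alternating product `⋯ a b a b` … of `m` factors,
ending with `b` (e.g. `altEnd a b 3 = b * a * b`). -/
def altEnd {G : Type*} [Monoid G] : G → G → ℕ → G
  | _, _, 0 => 1
  | a, b, m + 1 => altEnd b a m * b

/-- The class of `z` under the equivalence "being nonzero scalar multiples of each
other" (the class `ẑ`). -/
def rayClass {V : Type*} [AddCommGroup V] [Module ℝ V] (z : V) : Set V :=
  { v | ∃ c : ℝ, c ≠ 0 ∧ v = c • z }

/-- The set `Â = {ẑ : z ∈ A}` of scalar-equivalence classes of elements of `A`. -/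
def rayClasses {V : Type*} [AddCommGroup V] [Module ℝ V] (A : Set V) : Set (Set V) :=
  { C | ∃ z ∈ A, C = rayClass z }

/-- A Coxeter datum `(S, V₁, V₂, Π₁, Π₂, ⟨·,·⟩)` satisfying (D1)–(D5), together with
its associated abstract Coxeter group `W` (a group generated by involutions
`r s`, acting faithfully on `V₁` and `V₂` in the prescribed way, with the pairing
`W`-invariant), the decomposition `Φᵢ = Φᵢ⁺ ⊎ Φᵢ⁻` of the paired root systems, the
`W`-equivariant bijection `φ : Φ₁ → Φ₂` (with inverse `phiInv`), and the reflections
`r_x ∈ T` attached to the roots `x ∈ Φ₁` (`refl₁`) resp. `y ∈ Φ₂` (`refl₂`). -/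
structure CoxeterDatum (S : Type*) (V₁ : Type*) (V₂ : Type*) (W : Type*)
    [AddCommGroup V₁] [Module ℝ V₁] [AddCommGroup V₂] [Module ℝ V₂] [Group W] where
  pair : V₁ →ₗ[ℝ] V₂ →ₗ[ℝ] ℝ
  α : S → V₁
  β : S → V₂
  α_inj : Function.Injective α
  β_inj : Function.Injective β
  D1 : ∀ s, pair (α s) (β s) = 1
  D2a : (0 : V₁) ∉ PLC (Set.range α)
  D2b : (0 : V₂) ∉ PLC (Set.range β)
  D2c : ∀ s, α s ∉ PLC (Set.range α \ {α s})
  D2d : ∀ s, β s ∉ PLC (Set.range β \ {β s})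
  D3 : ∀ s t, s ≠ t → pair (α s) (β t) ≤ 0
  D4 : ∀ s t, pair (α s) (β t) = 0 → pair (α t) (β s) = 0
  D5 : ∀ s t, s ≠ t →
    (∃ m : ℕ, 2 ≤ m ∧ pair (α s) (β t) * pair (α t) (β s) = Real.cos (Real.pi / m) ^ 2) ∨
      1 ≤ pair (α s) (β t) * pair (α t) (β s)
  /-- the Coxeter generators `R = {r s : s ∈ S}` of `W` -/
  r : S → W
  r_gen : Subgroup.closure (Set.range r) = ⊤
  r_ne_one : ∀ s, r s ≠ 1
  r_sq : ∀ s, r s * r s = 1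
  /-- the faithful action of `W` on `V₁` -/
  ρ₁ : W →* Module.End ℝ V₁
  /-- the faithful action of `W` on `V₂` -/
  ρ₂ : W →* Module.End ℝ V₂
  ρ₁_inj : Function.Injective ρ₁
  ρ₂_inj : Function.Injective ρ₂
  hr₁ : ∀ s x, ρ₁ (r s) x = x - (2 * pair x (β s)) • α s
  hr₂ : ∀ s y, ρ₂ (r s) y = y - (2 * pair (α s) y) • β s
  pair_inv : ∀ w x y, pair (ρ₁ w x) (ρ₂ w y) = pair x y
  /-- the `W`-equivariant bijection `φ : Φ₁ → Φ₂` -/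
  phi : V₁ → V₂
  /-- the inverse `φ⁻¹ : Φ₂ → Φ₁` -/
  phiInv : V₂ → V₁
  /-- the reflection `r_x` corresponding to a root `x ∈ Φ₁` -/
  refl₁ : V₁ → W
  /-- the reflection `r_y` corresponding to a root `y ∈ Φ₂` -/
  refl₂ : V₂ → W
  decomp₁ : { v | ∃ w s, v = ρ₁ w (α s) } =
      ({ v | ∃ w s, v = ρ₁ w (α s) } ∩ PLC (Set.range α)) ∪
        (-({ v | ∃ w s, v = ρ₁ w (α s) } ∩ PLC (Set.range α)))
  disj₁ : Disjoint ({ v | ∃ w s, v = ρ₁ w (α s) } ∩ PLC (Set.range α))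
      (-({ v | ∃ w s, v = ρ₁ w (α s) } ∩ PLC (Set.range α)))
  decomp₂ : { v | ∃ w s, v = ρ₂ w (β s) } =
      ({ v | ∃ w s, v = ρ₂ w (β s) } ∩ PLC (Set.range β)) ∪
        (-({ v | ∃ w s, v = ρ₂ w (β s) } ∩ PLC (Set.range β)))
  disj₂ : Disjoint ({ v | ∃ w s, v = ρ₂ w (β s) } ∩ PLC (Set.range β))
      (-({ v | ∃ w s, v = ρ₂ w (β s) } ∩ PLC (Set.range β)))
  phi_mem : ∀ x ∈ { v | ∃ w s, v = ρ₁ w (α s) }, phi x ∈ { v | ∃ w s, v = ρ₂ w (β s) }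
  phiInv_mem : ∀ y ∈ { v | ∃ w s, v = ρ₂ w (β s) }, phiInv y ∈ { v | ∃ w s, v = ρ₁ w (α s) }
  phiInv_phi : ∀ x ∈ { v | ∃ w s, v = ρ₁ w (α s) }, phiInv (phi x) = x
  phi_phiInv : ∀ y ∈ { v | ∃ w s, v = ρ₂ w (β s) }, phi (phiInv y) = y
  phi_simple : ∀ s, phi (α s) = β s
  phi_equiv : ∀ w, ∀ x ∈ { v | ∃ w s, v = ρ₁ w (α s) }, phi (ρ₁ w x) = ρ₂ w (phi x)
  refl₁_eq : ∀ w s, refl₁ (ρ₁ w (α s)) = w * r s * w⁻¹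
  refl₂_eq : ∀ w s, refl₂ (ρ₂ w (β s)) = w * r s * w⁻¹
  refl₁_act : ∀ x ∈ { v | ∃ w s, v = ρ₁ w (α s) }, ∀ v,
      ρ₁ (refl₁ x) v = v - (2 * pair v (phi x)) • x
  refl₂_act : ∀ y ∈ { v | ∃ w s, v = ρ₂ w (β s) }, ∀ v,
      ρ₂ (refl₂ y) v = v - (2 * pair (phiInv y) v) • y

namespace CoxeterDatum

variable {S V₁ V₂ W : Type*} [AddCommGroup V₁] [Module ℝ V₁]
  [AddCommGroup V₂] [Module ℝ V₂] [Group W]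

variable (D : CoxeterDatum S V₁ V₂ W)

/-- The root system `Φ₁ = W Π₁`. -/
def Phi₁ : Set V₁ := { v | ∃ w s, v = D.ρ₁ w (D.α s) }

/-- The root system `Φ₂ = W Π₂`. -/
def Phi₂ : Set V₂ := { v | ∃ w s, v = D.ρ₂ w (D.β s) }

/-- The positive roots `Φ₁⁺ = Φ₁ ∩ PLC Π₁`. -/
def PhiPos₁ : Set V₁ := D.Phi₁ ∩ PLC (Set.range D.α)

/-- The positive roots `Φ₂⁺ = Φ₂ ∩ PLC Π₂`. -/
def PhiPos₂ : Set V₂ := D.Phi₂ ∩ PLC (Set.range D.β)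

/-- The negative roots `Φ₁⁻ = -Φ₁⁺`. -/
def PhiNeg₁ : Set V₁ := -D.PhiPos₁

/-- The negative roots `Φ₂⁻ = -Φ₂⁺`. -/
def PhiNeg₂ : Set V₂ := -D.PhiPos₂

/-- The set `T = ⋃_{w ∈ W} w R w⁻¹` of reflections of `W`. -/
def T : Set W := { t | ∃ w s, t = w * D.r s * w⁻¹ }

/-- The length function `ℓ` of `W` with respect to the Coxeter generators `R`. -/
noncomputable def len (w : W) : ℕ :=
  sInf { n | ∃ l : List S, l.length = n ∧ (l.map D.r).prod = w }

/-- `N̄ w = {t ∈ T : ℓ(w t) < ℓ(w)}`. -/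
noncomputable def Nbar (w : W) : Set W :=
  { t | t ∈ D.T ∧ D.len (w * t) < D.len w }

/-- `N₁ w = {ẑ : z ∈ Φ₁⁺, w z ∈ Φ₁⁻}`. -/
def N₁ (w : W) : Set (Set V₁) :=
  { C | ∃ z, z ∈ D.PhiPos₁ ∧ D.ρ₁ w z ∈ D.PhiNeg₁ ∧ C = rayClass z }

/-- `N₂ w = {ẑ : z ∈ Φ₂⁺, w z ∈ Φ₂⁻}`. -/
def N₂ (w : W) : Set (Set V₂) :=
  { C | ∃ z, z ∈ D.PhiPos₂ ∧ D.ρ₂ w z ∈ D.PhiNeg₂ ∧ C = rayClass z }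

/-- A subgroup `W'` of `W` is a reflection subgroup when `W' = ⟨W' ∩ T⟩`. -/
def IsReflectionSubgroup (W' : Subgroup W) : Prop :=
  W' = Subgroup.closure ((W' : Set W) ∩ D.T)

/-- `Φ₁(W') = {x ∈ Φ₁ : r_x ∈ W'}`. -/
def PhiSub₁ (W' : Subgroup W) : Set V₁ :=
  { x | x ∈ D.Phi₁ ∧ D.refl₁ x ∈ W' }

/-- `Φ₂(W') = {y ∈ Φ₂ : r_y ∈ W'}`. -/
def PhiSub₂ (W' : Subgroup W) : Set V₂ :=
  { y | y ∈ D.Phi₂ ∧ D.refl₂ y ∈ W' }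

/-- The canonical generators `S(W') = {t ∈ T : N̄(t) ∩ W' = {t}}`. -/
noncomputable def SW (W' : Subgroup W) : Set W :=
  { t | t ∈ D.T ∧ D.Nbar t ∩ (W' : Set W) = {t} }

/-- `Δ₁(W') = {x ∈ Φ₁⁺ : r_x ∈ S(W')}`. -/
noncomputable def Delta₁ (W' : Subgroup W) : Set V₁ :=
  { x | x ∈ D.PhiPos₁ ∧ D.refl₁ x ∈ D.SW W' }

/-- `Δ₂(W') = {y ∈ Φ₂⁺ : r_y ∈ S(W')}`. -/
noncomputable def Delta₂ (W' : Subgroup W) : Set V₂ :=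
  { y | y ∈ D.PhiPos₂ ∧ D.refl₂ y ∈ D.SW W' }

/-- The length function `ℓ_{W'}` of a reflection subgroup `W'` with respect to its
canonical generators `S(W')`. -/
noncomputable def lenIn (W' : Subgroup W) (w : W) : ℕ :=
  sInf { n | ∃ l : List W, l.length = n ∧ (∀ t ∈ l, t ∈ D.SW W') ∧ l.prod = w }

end CoxeterDatum

section AuxPLC

variable {V : Type*} [AddCommGroup V] [Module ℝ V]

lemma plcSum_smul (k : ℝ) (f : V →₀ ℝ) :
    (k • f).sum (fun a t => t • a) = k • f.sum (fun a t => t • a) := by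
  rw [Finsupp.sum_smul_index (fun i => zero_smul ℝ i), Finsupp.smul_sum]
  apply Finsupp.sum_congr
  intro a _
  rw [mul_smul]

lemma PLC.smul_mem {A : Set V} {v : V} (hv : v ∈ PLC A) {k : ℝ} (hk : 0 < k) :
    k • v ∈ PLC A := by
  obtain ⟨f, hf0, hfs, hfne, hfsum⟩ := hv
  refine ⟨k • f, ?_, ?_, ?_, ?_⟩
  · intro a
    rw [Finsupp.smul_apply, smul_eq_mul]
    exact mul_nonneg hk.le (hf0 a)
  · exact subset_trans (Finset.coe_subset.mpr Finsupp.support_smul) hfs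
  · intro h
    apply hfne
    ext a
    have h2 := DFunLike.congr_fun h a
    rw [Finsupp.smul_apply, smul_eq_mul] at h2
    simpa using (mul_eq_zero.mp h2).resolve_left hk.ne'
  · rw [hfsum, plcSum_smul]

lemma PLC.add_mem {A : Set V} {u v : V} (hu : u ∈ PLC A) (hv : v ∈ PLC A) :
    u + v ∈ PLC A := by
  classical
  obtain ⟨f, hf0, hfs, hfne, hfsum⟩ := hu
  obtain ⟨g, hg0, hgs, hgne, hgsum⟩ := hv
  refine ⟨f + g, ?_, ?_, ?_, ?_⟩
  · intro a
    rw [Finsupp.add_apply]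
    exact add_nonneg (hf0 a) (hg0 a)
  · refine subset_trans (Finset.coe_subset.mpr Finsupp.support_add) ?_
    rw [Finset.coe_union]
    exact Set.union_subset hfs hgs
  · obtain ⟨a, ha⟩ := Finsupp.ne_iff.mp hfne
    have hfa : 0 < f a := lt_of_le_of_ne (hf0 a) (Ne.symm (by simpa using ha))
    intro h
    have h2 := DFunLike.congr_fun h a
    rw [Finsupp.add_apply] at h2
    simp only [Finsupp.coe_zero, Pi.zero_apply] at h2
    nlinarith [hg0 a]
  · rw [hfsum, hgsum]
    exact (Finsupp.sum_add_index' (fun a => zero_smul ℝ a) (fun a b c => add_smul b c a)).symm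

lemma PLC.single_mem {A : Set V} {a : V} (ha : a ∈ A) {k : ℝ} (hk : 0 < k) :
    k • a ∈ PLC A := by
  classical
  refine ⟨Finsupp.single a k, ?_, ?_, ?_, ?_⟩
  · intro b
    rw [Finsupp.single_apply]
    split <;> simp [hk.le]
  · refine subset_trans (Finset.coe_subset.mpr Finsupp.support_single_subset) ?_
    simpa using ha
  · intro h
    exact hk.ne' (Finsupp.single_eq_zero.mp h)
  · rw [Finsupp.sum_single_index (zero_smul ℝ a)]

lemma PLC.mem_of_mem {A : Set V} {a : V} (ha : a ∈ A) : a ∈ PLC A := by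
  simpa using PLC.single_mem ha one_pos

end AuxPLC

namespace CoxeterDatum

variable {S V₁ V₂ W : Type*} [AddCommGroup V₁] [Module ℝ V₁]
  [AddCommGroup V₂] [Module ℝ V₂] [Group W]

variable (D : CoxeterDatum S V₁ V₂ W)

lemma rho1_mul (u v : W) (x : V₁) : D.ρ₁ (u * v) x = D.ρ₁ u (D.ρ₁ v x) := by
  rw [map_mul, Module.End.mul_apply]

lemma rho2_mul (u v : W) (y : V₂) : D.ρ₂ (u * v) y = D.ρ₂ u (D.ρ₂ v y) := by
  rw [map_mul, Module.End.mul_apply]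

lemma rho1_one (x : V₁) : D.ρ₁ 1 x = x := by rw [map_one, Module.End.one_apply]

lemma rho2_one (y : V₂) : D.ρ₂ 1 y = y := by rw [map_one, Module.End.one_apply]

lemma rho1_inv (v : W) (x : V₁) : D.ρ₁ v⁻¹ (D.ρ₁ v x) = x := by
  rw [← D.rho1_mul, inv_mul_cancel, D.rho1_one]

lemma rho1_inv' (v : W) (x : V₁) : D.ρ₁ v (D.ρ₁ v⁻¹ x) = x := by
  rw [← D.rho1_mul, mul_inv_cancel, D.rho1_one]

lemma rho2_inv (v : W) (y : V₂) : D.ρ₂ v⁻¹ (D.ρ₂ v y) = y := by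
  rw [← D.rho2_mul, inv_mul_cancel, D.rho2_one]

lemma rho2_inv' (v : W) (y : V₂) : D.ρ₂ v (D.ρ₂ v⁻¹ y) = y := by
  rw [← D.rho2_mul, mul_inv_cancel, D.rho2_one]

lemma pair_rho_left (v : W) (x : V₁) (y : V₂) :
    D.pair (D.ρ₁ v⁻¹ x) y = D.pair x (D.ρ₂ v y) := by
  have h := D.pair_inv v (D.ρ₁ v⁻¹ x) y
  rw [D.rho1_inv'] at h
  exact h.symm

lemma pair_rho_right (v : W) (x : V₁) (y : V₂) :
    D.pair (D.ρ₁ v x) y = D.pair x (D.ρ₂ v⁻¹ y) := by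
  have h := D.pair_inv v x (D.ρ₂ v⁻¹ y)
  rwa [D.rho2_inv'] at h

lemma alpha_mem_Phi (s : S) : D.α s ∈ D.Phi₁ := ⟨1, s, (D.rho1_one _).symm⟩

lemma Phi_stable (w : W) {z : V₁} (hz : z ∈ D.Phi₁) : D.ρ₁ w z ∈ D.Phi₁ := by
  obtain ⟨u, p, rfl⟩ := hz
  exact ⟨w * u, p, (D.rho1_mul _ _ _).symm⟩

lemma r_alpha (s : S) : D.ρ₁ (D.r s) (D.α s) = -(D.α s) := by
  rw [D.hr₁, D.D1]
  module

lemma neg_mem_Phi {z : V₁} (hz : z ∈ D.Phi₁) : -z ∈ D.Phi₁ := by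
  obtain ⟨u, p, rfl⟩ := hz
  refine ⟨u * D.r p, p, ?_⟩
  rw [D.rho1_mul, D.r_alpha, map_neg]

lemma alpha_ne_zero (s : S) : D.α s ≠ 0 := by
  intro h
  apply D.D2a
  rw [← h]
  exact PLC.mem_of_mem ⟨s, rfl⟩

lemma mem_PhiNeg_iff {z : V₁} : z ∈ D.PhiNeg₁ ↔ -z ∈ D.PhiPos₁ := Set.mem_neg

lemma dichotomy {z : V₁} (hz : z ∈ D.Phi₁) : z ∈ D.PhiPos₁ ∨ z ∈ D.PhiNeg₁ := by
  have h : D.Phi₁ = D.PhiPos₁ ∪ -D.PhiPos₁ := D.decomp₁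
  rw [h] at hz
  exact hz

lemma pos_neg_disj {z : V₁} (h1 : z ∈ D.PhiPos₁) (h2 : z ∈ D.PhiNeg₁) : False := by
  have h : Disjoint D.PhiPos₁ (-D.PhiPos₁) := D.disj₁
  exact Set.disjoint_left.mp h h1 h2

lemma scale_pos {z : V₁} {c : ℝ} (hz : z ∈ D.PhiPos₁) (hcz : c • z ∈ D.PhiPos₁) :
    0 < c := by
  rcases lt_trichotomy 0 c with h | h | h
  · exact h
  · exfalso
    apply D.D2a
    have : (0 : V₁) = c • z := by rw [← h, zero_smul]
    rw [this]
    exact hcz.2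
  · exfalso
    apply D.D2a
    have h0 : c • z + (-c) • z = 0 := by module
    rw [← h0]
    exact PLC.add_mem hcz.2 (PLC.smul_mem hz.2 (by linarith))

lemma scale_mem {z : V₁} {c : ℝ} (hz : z ∈ D.PhiPos₁) (hc : 0 < c)
    (hmem : c • z ∈ D.Phi₁) : c • z ∈ D.PhiPos₁ := by
  rcases D.dichotomy hmem with h | h
  · exact h
  exfalso
  apply D.D2a
  have h2 : -(c • z) ∈ D.PhiPos₁ := D.mem_PhiNeg_iff.mp h
  have h0 : -(c • z) + c • z = 0 := by module
  rw [← h0]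
  exact PLC.add_mem h2.2 (PLC.smul_mem hz.2 hc)

lemma phi_root (u : W) (p : S) : D.phi (D.ρ₁ u (D.α p)) = D.ρ₂ u (D.β p) := by
  have h := D.phi_equiv u (D.α p) (D.alpha_mem_Phi p)
  rw [h, D.phi_simple]

lemma pair_self {x : V₁} (hx : x ∈ D.Phi₁) : D.pair x (D.phi x) = 1 := by
  obtain ⟨u, p, rfl⟩ := hx
  rw [D.phi_root, D.pair_inv, D.D1]

lemma refl_alpha (s : S) : D.refl₁ (D.α s) = D.r s := by
  have h := D.refl₁_eq 1 s
  rw [D.rho1_one] at h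
  rw [h]
  group

lemma refl_conj (w : W) {x : V₁} (hx : x ∈ D.Phi₁) :
    D.refl₁ (D.ρ₁ w x) = w * D.refl₁ x * w⁻¹ := by
  obtain ⟨u, p, rfl⟩ := hx
  rw [← D.rho1_mul, D.refl₁_eq, D.refl₁_eq]
  group

lemma r_inv (s : S) : (D.r s)⁻¹ = D.r s := inv_eq_of_mul_eq_one_right (D.r_sq s)

lemma refl_mem_T {x : V₁} (hx : x ∈ D.Phi₁) : D.refl₁ x ∈ D.T := by
  obtain ⟨u, p, rfl⟩ := hx
  rw [D.refl₁_eq]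
  exact ⟨u, p, rfl⟩

lemma refl_sq {x : V₁} (hx : x ∈ D.Phi₁) : D.refl₁ x * D.refl₁ x = 1 := by
  obtain ⟨u, p, rfl⟩ := hx
  rw [D.refl₁_eq]
  have : u * D.r p * u⁻¹ * (u * D.r p * u⁻¹) = u * (D.r p * D.r p) * u⁻¹ := by group
  rw [this, D.r_sq]
  group

lemma rho_refl_self {x : V₁} (hx : x ∈ D.Phi₁) : D.ρ₁ (D.refl₁ x) x = -x := by
  rw [D.refl₁_act x hx x, D.pair_self hx]
  module

lemma masterM (F : V₁ →₀ ℝ) (hsupp : ↑F.support ⊆ Set.range D.α)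
    (hpos : ∀ a, 0 ≤ F a) (s : S) (d : ℝ)
    (hsum : F.sum (fun a t => t • a) = d • D.α s)
    (a₀ : V₁) (ha : a₀ ≠ D.α s) (h0 : 0 < F a₀) : False := by
  classical
  set G := F.erase (D.α s) with hG
  have hsum2 : G.sum (fun a t => t • a) + (F (D.α s)) • D.α s = d • D.α s := by
    rw [← hsum]
    conv_rhs => rw [← Finsupp.erase_add_single (D.α s) F]
    rw [Finsupp.sum_add_index' (fun a => zero_smul ℝ a) (fun a b c => add_smul b c a),
        Finsupp.sum_single_index (zero_smul ℝ (D.α s))]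
  have hGsum : G.sum (fun a t => t • a) = (d - F (D.α s)) • D.α s := by
    rw [sub_smul]
    exact eq_sub_of_add_eq hsum2
  have hGsupp : ↑G.support ⊆ Set.range D.α \ {D.α s} := by
    rw [hG, Finsupp.support_erase]
    intro a hamem
    rw [Finset.coe_erase] at hamem
    exact ⟨hsupp hamem.1, hamem.2⟩
  have hGpos : ∀ a, 0 ≤ G a := by
    intro a
    rcases eq_or_ne a (D.α s) with h | h
    · rw [hG, h, Finsupp.erase_same]
    · rw [hG, Finsupp.erase_ne h]
      exact hpos a
  have hGa₀ : 0 < G a₀ := by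
    rw [hG, Finsupp.erase_ne ha]
    exact h0
  rcases le_or_gt (d - F (D.α s)) 0 with he | he
  · apply D.D2a
    refine ⟨G + Finsupp.single (D.α s) (-(d - F (D.α s))), ?_, ?_, ?_, ?_⟩
    · intro a
      rw [Finsupp.add_apply, Finsupp.single_apply]
      split
      · next h => linarith [hGpos a]
      · simpa using hGpos a
    · refine subset_trans (Finset.coe_subset.mpr Finsupp.support_add) ?_
      rw [Finset.coe_union]
      apply Set.union_subset
      · exact subset_trans hGsupp Set.diff_subset
      · refine subset_trans (Finset.coe_subset.mpr Finsupp.support_single_subset) ?_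
        simpa using ⟨s, rfl⟩
    · intro h
      have h2 := DFunLike.congr_fun h a₀
      rw [Finsupp.add_apply, Finsupp.single_apply] at h2
      simp only [Finsupp.coe_zero, Pi.zero_apply] at h2
      rw [if_neg (fun hh => ha hh.symm)] at h2
      linarith
    · rw [Finsupp.sum_add_index' (fun a => zero_smul ℝ a) (fun a b c => add_smul b c a),
          Finsupp.sum_single_index (zero_smul ℝ (D.α s)), hGsum]
      module
  · apply D.D2c s
    refine ⟨(d - F (D.α s))⁻¹ • G, ?_, ?_, ?_, ?_⟩
    · intro a
      rw [Finsupp.smul_apply, smul_eq_mul]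
      exact mul_nonneg (by positivity) (hGpos a)
    · exact subset_trans (Finset.coe_subset.mpr Finsupp.support_smul) hGsupp
    · intro h
      have h2 := DFunLike.congr_fun h a₀
      rw [Finsupp.smul_apply, smul_eq_mul] at h2
      simp only [Finsupp.coe_zero, Pi.zero_apply] at h2
      rcases mul_eq_zero.mp h2 with h3 | h3
      · exact (inv_ne_zero (by linarith)) h3
      · linarith
    · rw [plcSum_smul, hGsum, smul_smul, inv_mul_cancel₀ (by linarith), one_smul]

end CoxeterDatum

namespace CoxeterDatum

variable {S V₁ V₂ W : Type*} [AddCommGroup V₁] [Module ℝ V₁]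
  [AddCommGroup V₂] [Module ℝ V₂] [Group W]

variable (D : CoxeterDatum S V₁ V₂ W)

lemma coeff_nonneg {u s : S} (hus : D.α u ≠ D.α s) {d : ℝ}
    (h : D.α u + d • D.α s ∈ D.Phi₁) : 0 ≤ d := by
  classical
  by_contra hd
  push_neg at hd
  rcases D.dichotomy h with hp | hn
  · obtain ⟨f, hf0, hfs, hfne, hfsum⟩ := hp.2
    refine D.masterM (f + Finsupp.single (D.α s) (-d)) ?_ ?_ u 1 ?_ (D.α s) (Ne.symm hus) ?_
    · refine subset_trans (Finset.coe_subset.mpr Finsupp.support_add) ?_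
      rw [Finset.coe_union]
      apply Set.union_subset hfs
      refine subset_trans (Finset.coe_subset.mpr Finsupp.support_single_subset) ?_
      simp only [Finset.coe_singleton, Set.singleton_subset_iff]
      exact ⟨s, rfl⟩
    · intro a
      rw [Finsupp.add_apply, Finsupp.single_apply]
      split
      · linarith [hf0 a]
      · simpa using hf0 a
    · rw [Finsupp.sum_add_index' (fun a => zero_smul ℝ a) (fun a b c => add_smul b c a),
          Finsupp.sum_single_index (zero_smul ℝ (D.α s)), ← hfsum]
      module
    · rw [Finsupp.add_apply, Finsupp.single_eq_same]
      linarith [hf0 (D.α s)]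
  · have hneg : -(D.α u + d • D.α s) ∈ D.PhiPos₁ := D.mem_PhiNeg_iff.mp hn
    obtain ⟨g, hg0, hgs, hgne, hgsum⟩ := hneg.2
    refine D.masterM (g + Finsupp.single (D.α u) 1) ?_ ?_ s (-d) ?_ (D.α u) hus ?_
    · refine subset_trans (Finset.coe_subset.mpr Finsupp.support_add) ?_
      rw [Finset.coe_union]
      apply Set.union_subset hgs
      refine subset_trans (Finset.coe_subset.mpr Finsupp.support_single_subset) ?_
      simp only [Finset.coe_singleton, Set.singleton_subset_iff]
      exact ⟨u, rfl⟩
    · intro a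
      rw [Finsupp.add_apply, Finsupp.single_apply]
      split
      · linarith [hg0 a]
      · simpa using hg0 a
    · rw [Finsupp.sum_add_index' (fun a => zero_smul ℝ a) (fun a b c => add_smul b c a),
          Finsupp.sum_single_index (zero_smul ℝ (D.α u)), ← hgsum]
      module
    · rw [Finsupp.add_apply, Finsupp.single_eq_same]
      linarith [hg0 (D.α u)]

lemma lemS {t : S} {z : V₁} (hz : z ∈ D.PhiPos₁) (hnz : ∀ c : ℝ, z ≠ c • D.α t) :
    D.ρ₁ (D.r t) z ∈ D.PhiPos₁ := by
  classical
  have hmem : D.ρ₁ (D.r t) z ∈ D.Phi₁ := D.Phi_stable _ hz.1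
  rcases D.dichotomy hmem with hp | hn
  · exact hp
  exfalso
  obtain ⟨f, hf0, hfs, hfne, hfsum⟩ := hz.2
  have hneg : -(D.ρ₁ (D.r t) z) ∈ D.PhiPos₁ := D.mem_PhiNeg_iff.mp hn
  obtain ⟨g, hg0, hgs, hgne, hgsum⟩ := hneg.2
  have hsum : (f + g).sum (fun a t => t • a) = (2 * D.pair z (D.β t)) • D.α t := by
    rw [Finsupp.sum_add_index' (fun a => zero_smul ℝ a) (fun a b c => add_smul b c a),
        ← hfsum, ← hgsum]
    rw [D.hr₁]
    module
  have hex : ∃ a₀ ∈ f.support, a₀ ≠ D.α t := by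
    by_contra hcon
    push_neg at hcon
    have hss : f.support ⊆ {D.α t} := by
      intro a ha
      simp only [Finset.mem_singleton]
      exact hcon a ha
    have hfeq : f = Finsupp.single (D.α t) (f (D.α t)) :=
      Finsupp.support_subset_singleton.mp hss
    apply hnz (f (D.α t))
    rw [hfsum, hfeq, Finsupp.sum_single_index (zero_smul ℝ (D.α t))]
    rw [Finsupp.single_eq_same]
  obtain ⟨a₀, ha₀mem, ha₀⟩ := hex
  refine D.masterM (f + g) ?_ ?_ t (2 * D.pair z (D.β t)) hsum a₀ ha₀ ?_
  · refine subset_trans (Finset.coe_subset.mpr Finsupp.support_add) ?_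
    rw [Finset.coe_union]
    exact Set.union_subset hfs hgs
  · intro a
    rw [Finsupp.add_apply]
    exact add_nonneg (hf0 a) (hg0 a)
  · rw [Finsupp.add_apply]
    have : f a₀ ≠ 0 := Finsupp.mem_support_iff.mp ha₀mem
    have : 0 < f a₀ := lt_of_le_of_ne (hf0 a₀) (Ne.symm this)
    linarith [hg0 a₀]

lemma reflKey (v : W) (t s : S) (c : ℝ) (h : D.ρ₁ v (D.α t) = c • D.α s) :
    v * D.r t * v⁻¹ = D.r s := by
  have hc : c ≠ 0 := by
    intro h0
    apply D.alpha_ne_zero t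
    have h1 : D.ρ₁ v (D.α t) = 0 := by rw [h, h0, zero_smul]
    have h2 := D.rho1_inv v (D.α t)
    rw [h1, map_zero] at h2
    exact h2.symm
  set b := D.ρ₂ v (D.β t) with hbdef
  have hαb : D.pair (D.α s) b = 1 / c := by
    have h1 : D.pair (D.ρ₁ v (D.α t)) (D.ρ₂ v (D.β t)) = 1 := by rw [D.pair_inv, D.D1]
    rw [h, map_smul, LinearMap.smul_apply, smul_eq_mul] at h1
    rw [eq_div_iff hc]
    linear_combination h1
  set y₀ := c • b - D.β s with hy₀
  have hsy₀ : D.pair (D.α s) y₀ = 0 := by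
    rw [hy₀, map_sub, map_smul, smul_eq_mul, hαb, D.D1]
    field_simp
    ring
  set g := v * D.r t * v⁻¹ with hg
  set hh := D.r s * g with hhh
  have rho1_g : ∀ z, D.ρ₁ g z = z - (2 * c * D.pair z b) • D.α s := by
    intro z
    rw [hg, D.rho1_mul, D.rho1_mul, D.hr₁, map_sub, D.rho1_inv', map_smul, h,
        D.pair_rho_left]
    rw [← hbdef]
    module
  have rho1_hh : ∀ z, D.ρ₁ hh z = z + (2 * D.pair z y₀) • D.α s := by
    intro z
    rw [hhh, D.rho1_mul, rho1_g, D.hr₁]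
    have hps : D.pair (z - (2 * c * D.pair z b) • D.α s) (D.β s)
        = D.pair z (D.β s) - 2 * c * D.pair z b := by
      rw [map_sub, LinearMap.sub_apply, map_smul, LinearMap.smul_apply, smul_eq_mul, D.D1,
          mul_one]
    have hzy : D.pair z y₀ = c * D.pair z b - D.pair z (D.β s) := by
      rw [hy₀, map_sub, map_smul, smul_eq_mul]
    rw [hps, hzy]
    module
  have hpsi : ∀ u : S, D.pair (D.α u) y₀ = 0 := by
    intro u
    rcases eq_or_ne (D.α u) (D.α s) with hus | hus
    · rw [hus]; exact hsy₀
    · have h1 : D.ρ₁ hh (D.α u) = D.α u + (2 * D.pair (D.α u) y₀) • D.α s := rho1_hh _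
      have hmem1 : D.α u + (2 * D.pair (D.α u) y₀) • D.α s ∈ D.Phi₁ := by
        rw [← h1]; exact D.Phi_stable _ (D.alpha_mem_Phi u)
      have hge : 0 ≤ 2 * D.pair (D.α u) y₀ := D.coeff_nonneg hus hmem1
      set z' := D.ρ₁ hh⁻¹ (D.α u) with hz'
      have h2 : D.ρ₁ hh z' = D.α u := D.rho1_inv' hh _
      have h3 : z' + (2 * D.pair z' y₀) • D.α s = D.α u := by rw [← rho1_hh z']; exact h2
      have h4 : D.pair z' y₀ = D.pair (D.α u) y₀ := by
        have h5 := congrArg (fun w => D.pair w y₀) h3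
        simp only [map_add, LinearMap.add_apply, map_smul, LinearMap.smul_apply,
          smul_eq_mul] at h5
        rw [hsy₀] at h5
        linarith
      rw [h4] at h3
      have h6 : z' = D.α u + (-(2 * D.pair (D.α u) y₀)) • D.α s := by
        rw [neg_smul]
        rw [eq_sub_of_add_eq h3]
        module
      have h7 : D.α u + (-(2 * D.pair (D.α u) y₀)) • D.α s ∈ D.Phi₁ := by
        rw [← h6, hz']
        exact D.Phi_stable _ (D.alpha_mem_Phi u)
      have hle := D.coeff_nonneg hus h7
      linarith
  have hfix : ∀ u : S, D.ρ₁ hh (D.α u) = D.α u := by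
    intro u
    rw [rho1_hh, hpsi u, mul_zero, zero_smul, add_zero]
  have hcomm : hh * D.r s = D.r s * hh := by
    have h1 := D.refl₁_eq hh s
    rw [hfix s, D.refl_alpha] at h1
    have h2 : D.r s * hh = hh * D.r s * hh⁻¹ * hh := by rw [← h1]
    rw [inv_mul_cancel_right] at h2
    exact h2.symm
  have rho2_g : ∀ y, D.ρ₂ g y = y - (2 * c * D.pair (D.α s) y) • b := by
    intro y
    rw [hg, D.rho2_mul, D.rho2_mul, D.hr₂, map_sub, D.rho2_inv', map_smul]
    have hp : D.pair (D.α t) (D.ρ₂ v⁻¹ y) = c * D.pair (D.α s) y := by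
      rw [← D.pair_rho_right, h, map_smul, LinearMap.smul_apply, smul_eq_mul]
    rw [hp, ← hbdef]
    module
  have rho2_hh : ∀ y, D.ρ₂ hh y = y - (2 * D.pair (D.α s) y) • y₀ := by
    intro y
    rw [hhh, D.rho2_mul, rho2_g, D.hr₂]
    have hps : D.pair (D.α s) (y - (2 * c * D.pair (D.α s) y) • b)
        = D.pair (D.α s) y - (2 * c * D.pair (D.α s) y) * (1 / c) := by
      rw [map_sub, map_smul, smul_eq_mul, hαb]
    have hps' : D.pair (D.α s) (y - (2 * c * D.pair (D.α s) y) • b)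
        = - D.pair (D.α s) y := by
      rw [hps]
      field_simp
      ring
    rw [hps', hy₀]
    module
  have e1 : D.ρ₂ (D.r s) (D.β s) = -(D.β s) := by
    rw [D.hr₂, D.D1]
    module
  have e2 : D.ρ₂ hh (D.β s) = D.β s - (2 : ℝ) • y₀ := by
    rw [rho2_hh, D.D1]
    module
  have e3 : D.ρ₂ (D.r s) y₀ = y₀ := by
    rw [D.hr₂, hsy₀, mul_zero, zero_smul, sub_zero]
  have l1 : D.ρ₂ (hh * D.r s) (D.β s) = -(D.β s) + (2 : ℝ) • y₀ := by
    rw [D.rho2_mul, e1, map_neg, e2]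
    module
  have l2 : D.ρ₂ (D.r s * hh) (D.β s) = -(D.β s) - (2 : ℝ) • y₀ := by
    rw [D.rho2_mul, e2, map_sub, map_smul, e1, e3]
  have h3 : -(D.β s) + (2 : ℝ) • y₀ = -(D.β s) + (-((2 : ℝ) • y₀)) := by
    rw [← l1, hcomm, l2]
    module
  have h5 : (2 : ℝ) • y₀ = -((2 : ℝ) • y₀) := add_left_cancel h3
  have h6 : (4 : ℝ) • y₀ = 0 := by
    have h7 : (2 : ℝ) • y₀ + (2 : ℝ) • y₀ = 0 := by
      rw [eq_neg_iff_add_eq_zero] at h5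
      exact h5
    rw [show (4 : ℝ) = 2 + 2 by norm_num, add_smul]
    exact h7
  have hy₀0 : y₀ = 0 := by
    have h8 := congrArg (fun z => (4 : ℝ)⁻¹ • z) h6
    simpa [smul_smul] using h8
  have hrho2 : D.ρ₂ hh = D.ρ₂ 1 := by
    apply LinearMap.ext
    intro y
    rw [rho2_hh y, hy₀0, smul_zero, sub_zero, D.rho2_one]
  have hh1 : hh = 1 := D.ρ₂_inj hrho2
  rw [hhh] at hh1
  have hfin : g = (D.r s)⁻¹ := eq_inv_of_mul_eq_one_right hh1
  rw [hfin, D.r_inv]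

lemma refl_smul {x z : V₁} (hx : x ∈ D.Phi₁) (hz : z ∈ D.Phi₁) {c : ℝ}
    (h : x = c • z) : D.refl₁ x = D.refl₁ z := by
  obtain ⟨u, p, rfl⟩ := hx
  obtain ⟨v, q, rfl⟩ := hz
  have h2 : D.ρ₁ (v⁻¹ * u) (D.α p) = c • D.α q := by
    rw [D.rho1_mul, h, map_smul, D.rho1_inv]
  have h3 := D.reflKey (v⁻¹ * u) p q c h2
  rw [D.refl₁_eq, D.refl₁_eq, ← h3]
  group

end CoxeterDatum

namespace CoxeterDatum

variable {S V₁ V₂ W : Type*} [AddCommGroup V₁] [Module ℝ V₁]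
  [AddCommGroup V₂] [Module ℝ V₂] [Group W]

variable (D : CoxeterDatum S V₁ V₂ W)

lemma word_prod_reverse (l : List S) :
    ((l.reverse.map D.r).prod) = ((l.map D.r).prod)⁻¹ := by
  induction l with
  | nil => simp
  | cons a l ih =>
      rw [List.reverse_cons, List.map_append, List.prod_append, ih]
      simp [mul_inv_rev, D.r_inv]

lemma exists_word (w : W) : ∃ l : List S, (l.map D.r).prod = w := by
  have hw : w ∈ Subgroup.closure (Set.range D.r) := by rw [D.r_gen]; trivial
  induction hw using Subgroup.closure_induction with
  | mem x hx =>
      obtain ⟨s, rfl⟩ := hx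
      exact ⟨[s], by simp⟩
  | one => exact ⟨[], by simp⟩
  | mul x y hx hy ihx ihy =>
      obtain ⟨lx, hlx⟩ := ihx
      obtain ⟨ly, hly⟩ := ihy
      exact ⟨lx ++ ly, by simp [hlx, hly]⟩
  | inv x hx ihx =>
      obtain ⟨lx, hlx⟩ := ihx
      exact ⟨lx.reverse, by rw [D.word_prod_reverse, hlx]⟩

lemma len_le (w : W) (l : List S) (hl : (l.map D.r).prod = w) : D.len w ≤ l.length :=
  Nat.sInf_le ⟨l, rfl, hl⟩

lemma exists_min_word (w : W) :
    ∃ l : List S, l.length = D.len w ∧ (l.map D.r).prod = w := by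
  have hne : {n | ∃ l : List S, l.length = n ∧ (l.map D.r).prod = w}.Nonempty := by
    obtain ⟨l, hl⟩ := D.exists_word w
    exact ⟨l.length, l, rfl, hl⟩
  exact Nat.sInf_mem hne

lemma eq_one_of_len_zero {w : W} (h : D.len w = 0) : w = 1 := by
  obtain ⟨l, hlen, hprod⟩ := D.exists_min_word w
  rw [h, List.length_eq_zero_iff] at hlen
  subst hlen
  simpa using hprod.symm

lemma len_mul_r_le (w : W) (s : S) : D.len (w * D.r s) ≤ D.len w + 1 := by
  obtain ⟨l, hlen, hprod⟩ := D.exists_min_word w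
  refine le_trans (D.len_le _ (l ++ [s]) ?_) ?_
  · simp [hprod]
  · simp [hlen]

lemma len_r_mul_le (w : W) (s : S) : D.len (D.r s * w) ≤ D.len w + 1 := by
  obtain ⟨l, hlen, hprod⟩ := D.exists_min_word w
  refine le_trans (D.len_le _ (s :: l) ?_) ?_
  · simp [hprod]
  · simp [hlen]

lemma right_decomp {w : W} (h : D.len w ≠ 0) :
    ∃ (s : S) (w₁ : W), w = w₁ * D.r s ∧ D.len w₁ < D.len w := by
  obtain ⟨l, hlen, hprod⟩ := D.exists_min_word w
  rcases List.eq_nil_or_concat l with rfl | ⟨l', s, rfl⟩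
  · exact absurd (by rw [← hlen]; rfl) h
  · refine ⟨s, (l'.map D.r).prod, ?_, ?_⟩
    · rw [← hprod]; simp
    · have h2 := D.len_le _ l' rfl
      have h3 : l'.length + 1 = D.len w := by rw [← hlen]; simp
      omega

lemma claimA : ∀ (n : ℕ) (w : W) (x : V₁), D.len w ≤ n → x ∈ D.PhiPos₁ →
    D.ρ₁ w x ∈ D.PhiNeg₁ → D.len (w * D.refl₁ x) < D.len w := by
  intro n
  induction n with
  | zero =>
      intro w x hw hx hneg
      exfalso
      have hw1 : w = 1 := D.eq_one_of_len_zero (Nat.le_zero.mp hw)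
      rw [hw1, D.rho1_one] at hneg
      exact D.pos_neg_disj hx hneg
  | succ n ih =>
      intro w x hw hx hneg
      have hw0 : D.len w ≠ 0 := by
        intro h0
        have hw1 := D.eq_one_of_len_zero h0
        rw [hw1, D.rho1_one] at hneg
        exact D.pos_neg_disj hx hneg
      obtain ⟨s, w₁, rfl, hlt⟩ := D.right_decomp hw0
      by_cases hc : ∃ c : ℝ, x = c • D.α s
      · obtain ⟨c, hcx⟩ := hc
        have hrx : D.refl₁ x = D.r s := by
          rw [D.refl_smul hx.1 (D.alpha_mem_Phi s) hcx, D.refl_alpha]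
        rw [hrx, mul_assoc, D.r_sq, mul_one]
        exact hlt
      · push_neg at hc
        have hx' : D.ρ₁ (D.r s) x ∈ D.PhiPos₁ := D.lemS hx hc
        have hneg' : D.ρ₁ w₁ (D.ρ₁ (D.r s) x) ∈ D.PhiNeg₁ := by
          rw [← D.rho1_mul]; exact hneg
        have ihh := ih w₁ (D.ρ₁ (D.r s) x) (by omega) hx' hneg'
        have hconj : D.refl₁ (D.ρ₁ (D.r s) x) = D.r s * D.refl₁ x * (D.r s)⁻¹ :=
          D.refl_conj _ hx.1
        rw [hconj, D.r_inv] at ihh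
        have hkey : w₁ * (D.r s * D.refl₁ x * D.r s) = w₁ * D.r s * D.refl₁ x * D.r s := by
          group
        rw [hkey] at ihh
        have htri := D.len_mul_r_le (w₁ * D.r s * D.refl₁ x * D.r s) s
        have hred : w₁ * D.r s * D.refl₁ x * D.r s * D.r s = w₁ * D.r s * D.refl₁ x := by
          rw [mul_assoc, D.r_sq, mul_one]
        rw [hred] at htri
        omega

lemma claimB (w : W) {x : V₁} (hx : x ∈ D.PhiPos₁)
    (h : D.len (w * D.refl₁ x) < D.len w) : D.ρ₁ w x ∈ D.PhiNeg₁ := by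
  rcases D.dichotomy (D.Phi_stable w hx.1) with hp | hn
  · exfalso
    have h1 : D.ρ₁ (w * D.refl₁ x) x ∈ D.PhiNeg₁ := by
      rw [D.rho1_mul, D.rho_refl_self hx.1, map_neg, D.mem_PhiNeg_iff, neg_neg]
      exact hp
    have h2 := D.claimA (D.len (w * D.refl₁ x)) (w * D.refl₁ x) x le_rfl hx h1
    rw [mul_assoc, D.refl_sq hx.1, mul_one] at h2
    omega
  · exact hn

theorem Nbar_eq (w : W) :
    D.Nbar w = { t | ∃ x ∈ D.PhiPos₁, rayClass x ∈ D.N₁ w ∧ t = D.refl₁ x } := by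
  ext t
  constructor
  · rintro ⟨⟨u, p, rfl⟩, hlen⟩
    have hmem : D.ρ₁ u (D.α p) ∈ D.Phi₁ := D.Phi_stable u (D.alpha_mem_Phi p)
    rcases D.dichotomy hmem with hp | hn
    · have ht : D.refl₁ (D.ρ₁ u (D.α p)) = u * D.r p * u⁻¹ := D.refl₁_eq u p
      have hneg : D.ρ₁ w (D.ρ₁ u (D.α p)) ∈ D.PhiNeg₁ := by
        apply D.claimB w hp
        rw [ht]; exact hlen
      exact ⟨_, hp, ⟨_, hp, hneg, rfl⟩, ht.symm⟩
    · set x := -(D.ρ₁ u (D.α p)) with hxdef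
      have hxpos : x ∈ D.PhiPos₁ := D.mem_PhiNeg_iff.mp hn
      have hrx : D.refl₁ x = u * D.r p * u⁻¹ := by
        have hx2 : x = D.ρ₁ (u * D.r p) (D.α p) := by
          rw [D.rho1_mul, D.r_alpha, map_neg, hxdef]
        rw [hx2, D.refl₁_eq, mul_inv_rev, D.r_inv]
        have e : u * D.r p * D.r p * (D.r p * u⁻¹) = u * (D.r p * (D.r p * D.r p)) * u⁻¹ := by
          group
        rw [e, D.r_sq, mul_one]
      have hneg : D.ρ₁ w x ∈ D.PhiNeg₁ := by
        apply D.claimB w hxpos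
        rw [hrx]; exact hlen
      exact ⟨x, hxpos, ⟨x, hxpos, hneg, rfl⟩, hrx.symm⟩
  · rintro ⟨x, hx, ⟨z, hz, hwz, hray⟩, rfl⟩
    have hzx : ∃ c : ℝ, c ≠ 0 ∧ z = c • x := by
      have hzz : z ∈ rayClass z := ⟨1, one_ne_zero, (one_smul ℝ z).symm⟩
      rw [← hray] at hzz
      exact hzz
    obtain ⟨c, hc0, hzc⟩ := hzx
    have hcpos : 0 < c := D.scale_pos hx (hzc ▸ hz)
    have hneg : D.ρ₁ w x ∈ D.PhiNeg₁ := by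
      rw [D.mem_PhiNeg_iff]
      have h1 : -(D.ρ₁ w z) ∈ D.PhiPos₁ := D.mem_PhiNeg_iff.mp hwz
      have h2 : -(D.ρ₁ w x) = c⁻¹ • (-(D.ρ₁ w z)) := by
        rw [hzc, map_smul, ← smul_neg, smul_smul, inv_mul_cancel₀ hc0, one_smul]
      rw [h2]
      apply D.scale_mem h1 (by positivity)
      rw [← h2]
      exact D.neg_mem_Phi (D.Phi_stable w hx.1)
    refine ⟨D.refl_mem_T hx.1, ?_⟩
    exact D.claimA (D.len w) w x le_rfl hx hneg

end CoxeterDatum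

namespace CoxeterDatum

variable {S V₁ V₂ W : Type*} [AddCommGroup V₁] [Module ℝ V₁]
  [AddCommGroup V₂] [Module ℝ V₂] [Group W]

/-- The dual Coxeter datum, with the roles of `V₁` and `V₂` interchanged. -/
def dual (D : CoxeterDatum S V₁ V₂ W) : CoxeterDatum S V₂ V₁ W where
  pair := D.pair.flip
  α := D.β
  β := D.α
  α_inj := D.β_inj
  β_inj := D.α_inj
  D1 := fun s => by rw [LinearMap.flip_apply]; exact D.D1 s
  D2a := D.D2b
  D2b := D.D2a
  D2c := D.D2d
  D2d := D.D2c
  D3 := fun s t hst => by rw [LinearMap.flip_apply]; exact D.D3 t s (Ne.symm hst)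
  D4 := fun s t h => by
    rw [LinearMap.flip_apply] at h ⊢
    exact D.D4 t s h
  D5 := fun s t hst => by
    rw [LinearMap.flip_apply, LinearMap.flip_apply]
    exact D.D5 t s (Ne.symm hst)
  r := D.r
  r_gen := D.r_gen
  r_ne_one := D.r_ne_one
  r_sq := D.r_sq
  ρ₁ := D.ρ₂
  ρ₂ := D.ρ₁
  ρ₁_inj := D.ρ₂_inj
  ρ₂_inj := D.ρ₁_inj
  hr₁ := fun s y => by rw [LinearMap.flip_apply]; exact D.hr₂ s y
  hr₂ := fun s x => by rw [LinearMap.flip_apply]; exact D.hr₁ s x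
  pair_inv := fun w y x => by
    rw [LinearMap.flip_apply, LinearMap.flip_apply]
    exact D.pair_inv w x y
  phi := D.phiInv
  phiInv := D.phi
  refl₁ := D.refl₂
  refl₂ := D.refl₁
  decomp₁ := D.decomp₂
  disj₁ := D.disj₂
  decomp₂ := D.decomp₁
  disj₂ := D.disj₁
  phi_mem := D.phiInv_mem
  phiInv_mem := D.phi_mem
  phiInv_phi := D.phi_phiInv
  phi_phiInv := D.phiInv_phi
  phi_simple := fun s => by
    have h := D.phiInv_phi (D.α s) (D.alpha_mem_Phi s)
    rwa [D.phi_simple] at h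
  phi_equiv := fun w y hy => by
    have hx := D.phiInv_mem y hy
    have h1 : D.phi (D.phiInv y) = y := D.phi_phiInv y hy
    have h2 := D.phi_equiv w (D.phiInv y) hx
    rw [h1] at h2
    have h3 := D.phiInv_phi (D.ρ₁ w (D.phiInv y)) (D.Phi_stable w hx)
    rw [h2] at h3
    exact h3
  refl₁_eq := D.refl₂_eq
  refl₂_eq := D.refl₁_eq
  refl₁_act := fun y hy v => by
    rw [LinearMap.flip_apply]
    exact D.refl₂_act y hy v
  refl₂_act := fun x hx v => by
    rw [LinearMap.flip_apply]
    exact D.refl₁_act x hx v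

end CoxeterDatum


/-- For every `w ∈ W` and each `i ∈ {1,2}`,
`N̄(w) = {r_x : x ∈ Φᵢ⁺, x̂ ∈ Nᵢ(w)}`. -/
theorem stmt11 {S V₁ V₂ W : Type*} [AddCommGroup V₁] [Module ℝ V₁]
    [AddCommGroup V₂] [Module ℝ V₂] [Group W]
    (D : CoxeterDatum S V₁ V₂ W)
    (w : W) :
    D.Nbar w = { t | ∃ x ∈ D.PhiPos₁, rayClass x ∈ D.N₁ w ∧ t = D.refl₁ x } ∧
    D.Nbar w = { t | ∃ y ∈ D.PhiPos₂, rayClass y ∈ D.N₂ w ∧ t = D.refl₂ y } := by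
  constructor
  · exact D.Nbar_eq w
  · exact CoxeterDatum.Nbar_eq D.dual w
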